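/- Let β > 0, μ ≥ 0, let F⁰ : ℝ^d → ℝ be β-smooth, let f¹ : ℝ^d → ℝ be convex, set F := F⁰ + f¹, and suppose F is bounded below with F* := inf_{w'∈ℝ^d} F(w'). For α > 0 define D_{f¹}(w, α) := −2α · inf_{y∈ℝ^d} [⟨∇F⁰(w), y − w⟩ + (α/2)‖y − w‖² + f¹(y) − f¹(w)]. Fix w ∈ ℝ^d and suppose the proximal-PL inequality μ·(F(w) − F*) ≤ (1/2)·D_{f¹}(w, β) holds at w. Let 0 < η ≤ 1/β and ŵ := prox_{ηf¹}(w − η ∇F⁰(w)). Then F(ŵ) ≤ F(w) − η·μ·(F(w) − F*). -/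

import Mathlib

open scoped RealInnerProductSpace

lemma descent_aux {d : ℕ} (β : ℝ) (hβ : 0 < β) (F0 : EuclideanSpace ℝ (Fin d) → ℝ)
    (hdiff : Differentiable ℝ F0)
    (hsmooth : ∀ x y, ‖gradient F0 x - gradient F0 y‖ ≤ β * ‖x - y‖)
    (x y : EuclideanSpace ℝ (Fin d)) :
    F0 y ≤ F0 x + ⟪gradient F0 x, y - x⟫ + β / 2 * ‖y - x‖ ^ 2 := by
  set G : ℝ → ℝ := fun t => ⟪gradient F0 (x + t • (y - x)), y - x⟫ with hGdef
  have hderiv : ∀ t : ℝ, HasDerivAt (fun s : ℝ => F0 (x + s • (y - x))) (G t) t := by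
    intro t
    have h1 := ((hdiff (x + t • (y - x))).hasGradientAt).hasFDerivAt
    have h2 : HasDerivAt (fun s : ℝ => x + s • (y - x)) (y - x) t := by
      simpa using ((hasDerivAt_id t).smul_const (y - x)).const_add x
    have h3 := h1.comp_hasDerivAt t h2
    exact h3
  have hlip : LipschitzWith ⟨β, hβ.le⟩ fun z => gradient F0 z := by
    apply LipschitzWith.of_dist_le_mul
    intro a b
    rw [dist_eq_norm, dist_eq_norm]
    exact hsmooth a b
  have hcontG : Continuous G := by
    apply Continuous.inner
    · exact hlip.continuous.comp (by continuity)
    · exact continuous_const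
  have hint : ∫ t in (0:ℝ)..1, G t = F0 y - F0 x := by
    have := intervalIntegral.integral_eq_sub_of_hasDerivAt
      (f := fun s : ℝ => F0 (x + s • (y - x))) (f' := G)
      (fun t _ => hderiv t) (hcontG.intervalIntegrable 0 1)
    simpa using this
  have hG0 : G 0 = ⟪gradient F0 x, y - x⟫ := by simp [hGdef]
  have hbound : ∀ t ∈ Set.Icc (0:ℝ) 1, G t ≤ G 0 + β * ‖y - x‖ ^ 2 * t := by
    intro t ht
    have h1 : G t - G 0 ≤ ‖gradient F0 (x + t • (y - x)) - gradient F0 x‖ * ‖y - x‖ := by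
      have h := real_inner_le_norm (gradient F0 (x + t • (y - x)) - gradient F0 x) (y - x)
      rw [inner_sub_left] at h
      rw [hG0]
      simpa [hGdef] using h
    have h2 : ‖gradient F0 (x + t • (y - x)) - gradient F0 x‖ ≤ β * (t * ‖y - x‖) := by
      have h := hsmooth (x + t • (y - x)) x
      simpa [norm_smul, abs_of_nonneg ht.1] using h
    nlinarith [norm_nonneg (y - x), mul_nonneg (mul_nonneg hβ.le ht.1) (sq_nonneg ‖y - x‖)]
  have hmono : ∫ t in (0:ℝ)..1, G t ≤ ∫ t in (0:ℝ)..1, (G 0 + β * ‖y - x‖ ^ 2 * t) := by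
    apply intervalIntegral.integral_mono_on zero_le_one (hcontG.intervalIntegrable 0 1)
    · exact ((continuous_const.add (continuous_const.mul continuous_id)).intervalIntegrable 0 1)
    · exact hbound
  have hval : ∫ t in (0:ℝ)..1, (G 0 + β * ‖y - x‖ ^ 2 * t) = G 0 + β / 2 * ‖y - x‖ ^ 2 := by
    have : ∫ t in (0:ℝ)..1, (G 0 + β * ‖y - x‖ ^ 2 * t)
        = ∫ t in (0:ℝ)..1, (G 0 + β * ‖y - x‖ ^ 2 * id t) := by
      simp [id]
    rw [this, intervalIntegral.integral_add (f := fun _ => G 0)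
      (g := fun t => β * ‖y - x‖ ^ 2 * id t) intervalIntegrable_const
      ((continuous_const.mul continuous_id).intervalIntegrable 0 1),
      intervalIntegral.integral_const_mul]
    simp only [id_eq]
    rw [integral_id]
    simp
    ring
  rw [hint] at hmono
  rw [hval, hG0] at hmono
  linarith


/-- Proximal-PL descent: for `β`-smooth `F⁰`, convex `f¹`, `F = F⁰ + f¹` bounded below
with infimum `F*`, if the proximal-PL inequality `μ(F(w) - F*) ≤ (1/2) D_{f¹}(w, β)`
holds at `w` and `wh = prox_{ηf¹}(w - η ∇F⁰(w))` with `0 < η ≤ 1/β`, then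
`F(wh) ≤ F(w) - ημ(F(w) - F*)`. -/
theorem stmt9 {d : ℕ} (β μ η : ℝ) (hβ : 0 < β) (hμ : 0 ≤ μ)
    (hη0 : 0 < η) (hη : η ≤ 1 / β)
    (F0 f1 : EuclideanSpace ℝ (Fin d) → ℝ)
    (hdiff : Differentiable ℝ F0)
    (hsmooth : ∀ x y, ‖gradient F0 x - gradient F0 y‖ ≤ β * ‖x - y‖)
    (hconv : ConvexOn ℝ Set.univ f1)
    (hbdd : BddBelow (Set.range fun v => F0 v + f1 v))
    (Fstar : ℝ) (hFstar : Fstar = ⨅ v, (F0 v + f1 v))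
    (w wh : EuclideanSpace ℝ (Fin d))
    (hPL : μ * (F0 w + f1 w - Fstar) ≤
      (1 / 2) * (-2 * β *
        ⨅ y, (⟪gradient F0 w, y - w⟫ + (β / 2) * ‖y - w‖ ^ 2 + f1 y - f1 w)))
    (hwh : ∀ v, η * f1 wh + (1 / 2) * ‖wh - (w - η • gradient F0 w)‖ ^ 2
        ≤ η * f1 v + (1 / 2) * ‖v - (w - η • gradient F0 w)‖ ^ 2) :
    F0 wh + f1 wh ≤ F0 w + f1 w - η * μ * (F0 w + f1 w - Fstar) := by
  set g := gradient F0 w with hg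
  set Q : EuclideanSpace ℝ (Fin d) → ℝ :=
    fun y => ⟪g, y - w⟫ + (β / 2) * ‖y - w‖ ^ 2 + f1 y - f1 w with hQ
  set I : ℝ := ⨅ y, Q y with hI
  have hβη : η * β ≤ 1 := by
    have := (le_div_iff₀ hβ).mp hη
    linarith
  have hexp : ∀ u : EuclideanSpace ℝ (Fin d),
      ‖u - (w - η • g)‖ ^ 2 = ‖u - w‖ ^ 2 + 2 * η * ⟪g, u - w⟫ + η ^ 2 * ‖g‖ ^ 2 := by
    intro u
    have h1 : u - (w - η • g) = (u - w) + η • g := by abel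
    rw [h1, @norm_add_sq_real, real_inner_smul_right, real_inner_comm (u - w) g, norm_smul,
      Real.norm_eq_abs, mul_pow, sq_abs]
    ring
  -- Step A: prox optimality, division-free form
  have hA : ∀ v, 2 * η * f1 wh + 2 * η * ⟪g, wh - w⟫ + ‖wh - w‖ ^ 2
      ≤ 2 * η * f1 v + 2 * η * ⟪g, v - w⟫ + ‖v - w‖ ^ 2 := by
    intro v
    have h := hwh v
    rw [hexp wh, hexp v] at h
    linarith
  -- Step B
  have hB : ∀ y, 2 * η * f1 wh + 2 * η * ⟪g, wh - w⟫ + ‖wh - w‖ ^ 2 - 2 * η * f1 w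
      ≤ 2 * η * (η * β) * Q y := by
    intro y
    set t : ℝ := η * β with ht
    have ht0 : 0 < t := mul_pos hη0 hβ
    have ht1 : t ≤ 1 := hβη
    have hv : (w + t • (y - w)) = (1 - t) • w + t • y := by
      rw [sub_smul, one_smul, smul_sub]; abel
    have hconvx : f1 (w + t • (y - w)) ≤ (1 - t) * f1 w + t * f1 y := by
      rw [hv]
      exact hconv.2 (Set.mem_univ w) (Set.mem_univ y) (by linarith) ht0.le (by ring)
    have h := hA (w + t • (y - w))
    have hsub : (w + t • (y - w)) - w = t • (y - w) := by abel
    rw [hsub, real_inner_smul_right] at h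
    have hnorm : ‖t • (y - w)‖ ^ 2 = t ^ 2 * ‖y - w‖ ^ 2 := by
      rw [norm_smul, Real.norm_eq_abs, mul_pow, sq_abs]
    rw [hnorm] at h
    have hconvx2 : 2 * η * f1 (w + t • (y - w)) ≤ 2 * η * ((1 - t) * f1 w + t * f1 y) :=
      mul_le_mul_of_nonneg_left hconvx (by positivity)
    have hQy : Q y = ⟪g, y - w⟫ + (β / 2) * ‖y - w‖ ^ 2 + f1 y - f1 w := by rw [hQ]
    have htt : t ^ 2 * ‖y - w‖ ^ 2 = 2 * η * t * (β / 2 * ‖y - w‖ ^ 2) := by rw [ht]; ring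
    have htq : 2 * η * (η * β) * Q y = 2 * η * t * Q y := by rw [ht]
    rw [htq, hQy]
    linarith [h, hconvx2, htt]
  -- Step C
  have hC : 2 * η * f1 wh + 2 * η * ⟪g, wh - w⟫ + ‖wh - w‖ ^ 2 - 2 * η * f1 w
      ≤ 2 * η * (η * β) * I := by
    set L : ℝ := 2 * η * f1 wh + 2 * η * ⟪g, wh - w⟫ + ‖wh - w‖ ^ 2 - 2 * η * f1 w with hL
    have hc0 : 0 < 2 * η * (η * β) := by positivity
    have h1 : L / (2 * η * (η * β)) ≤ I := by
      apply le_ciInf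
      intro y
      rw [div_le_iff₀ hc0]
      calc L ≤ 2 * η * (η * β) * Q y := hB y
        _ = Q y * (2 * η * (η * β)) := by ring
    calc L = (L / (2 * η * (η * β))) * (2 * η * (η * β)) := by field_simp
      _ ≤ I * (2 * η * (η * β)) := mul_le_mul_of_nonneg_right h1 hc0.le
      _ = 2 * η * (η * β) * I := by ring
  -- Step D: descent lemma
  have hD : F0 wh ≤ F0 w + ⟪g, wh - w⟫ + β / 2 * ‖wh - w‖ ^ 2 := by
    have h := descent_aux β hβ F0 hdiff hsmooth w wh
    rw [← hg] at h
    exact h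
  have hD2 : 2 * η * F0 wh ≤ 2 * η * F0 w + 2 * η * ⟪g, wh - w⟫ + ‖wh - w‖ ^ 2 := by
    have h2 : 2 * η * F0 wh ≤ 2 * η * (F0 w + ⟪g, wh - w⟫ + β / 2 * ‖wh - w‖ ^ 2) :=
      mul_le_mul_of_nonneg_left hD (by positivity)
    nlinarith [sq_nonneg ‖wh - w‖, hβη, hη0]
  -- Step E
  have hE : μ * (F0 w + f1 w - Fstar) ≤ -(β * I) := by
    have : (1 / 2 : ℝ) * (-2 * β * I) = -(β * I) := by ring
    rw [← this]
    exact hPL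
  have hE2 : 2 * η * (η * β) * I ≤ -(2 * η * η * (μ * (F0 w + f1 w - Fstar))) := by
    have h2 : 2 * η * η * (μ * (F0 w + f1 w - Fstar)) ≤ 2 * η * η * (-(β * I)) :=
      mul_le_mul_of_nonneg_left hE (by positivity)
    nlinarith [h2]
  -- combine
  have hfinal : 2 * η * (F0 wh + f1 wh) ≤ 2 * η * (F0 w + f1 w - η * μ * (F0 w + f1 w - Fstar)) := by
    nlinarith [hC, hD2, hE2]
  have := le_of_mul_le_mul_left (by linarith [hfinal] :
    (2 * η) * (F0 wh + f1 wh) ≤ (2 * η) * (F0 w + f1 w - η * μ * (F0 w + f1 w - Fstar)))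
    (by positivity : (0:ℝ) < 2 * η)
  exact this
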